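/- Let d ≥ 2 and let u ∈ L²(μ₁ ⊗ ⋯ ⊗ μ_d) admit the tensor-train expansion u = Σ_{i₁=1}^∞ Σ_{i₂=1}^∞ ⋯ Σ_{i_{d−1}=1}^∞ λ_{i₁} λ_{i₁i₂} ⋯ λ_{i₁⋯i_{d−1}} T_{i₁⋯i_{d−1}} (convergence in L²), with a TT mode hierarchy and nonnegative coefficients λ_{i₁}, λ_{i₁i₂}, …, λ_{i₁⋯i_{d−1}}. Given truncation ranks r₁ ∈ ℕ and r_j = r_j(i₁,…,i_{j−1}) ∈ ℕ for j = 2,…,d−1, let ũ be the truncated expansion ũ = Σ_{i₁=1}^{r₁} Σ_{i₂=1}^{r₂} ⋯ Σ_{i_{d−1}=1}^{r_{d−1}} λ_{i₁} ⋯ λ_{i₁⋯i_{d−1}} T_{i₁⋯i_{d−1}}. Then the truncation error satisfies ‖u − ũ‖²_{L²} = Σ_{i₁=r₁+1}^∞ λ_{i₁}² + Σ_{i₁=1}^{r₁} Σ_{i₂=r₂+1}^∞ λ_{i₁}² λ_{i₁i₂}² + ⋯ + Σ_{i₁=1}^{r₁} Σ_{i₂=1}^{r₂} ⋯ Σ_{i_{d−2}=1}^{r_{d−2}}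 Σ_{i_{d−1}=r_{d−1}+1}^∞ λ_{i₁}² λ_{i₁i₂}² ⋯ λ_{i₁⋯i_{d−1}}². -/

import Mathlib

open MeasureTheory ENNReal

private lemma parseval_aux {ι E : Type*} [NormedAddCommGroup E]
    [InnerProductSpace ℝ E] {w : ι → E}
    (hone : ∀ i, (inner ℝ (w i) (w i) : ℝ) = 1)
    (hzero : ∀ i j, i ≠ j → (inner ℝ (w i) (w j) : ℝ) = 0)
    {c : ι → ℝ} {x : E} (hx : HasSum (fun i => c i • w i) x) :
    HasSum (fun i => c i ^ 2) (‖x‖ ^ 2) := by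
  classical
  have key : ∀ i, (inner ℝ (w i) x : ℝ) = c i := by
    intro i
    have h1 := hx.mapL (innerSL ℝ (w i))
    have he : (fun j => (innerSL ℝ (w i)) (c j • w j)) = fun j => if j = i then c i else 0 := by
      funext j
      simp only [innerSL_apply_apply, real_inner_smul_right]
      by_cases h : j = i
      · subst h; rw [hone j, mul_one, if_pos rfl]
      · rw [hzero i j (fun h' => h h'.symm), mul_zero, if_neg h]
    rw [he] at h1
    have := h1.unique (hasSum_ite_eq i (c i))
    simpa using this
  have h2 := hx.mapL (innerSL ℝ x)
  have he2 : (fun i => (innerSL ℝ x) (c i • w i)) = fun i => c i ^ 2 := by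
    funext i
    simp only [innerSL_apply_apply, real_inner_smul_right]
    rw [real_inner_comm, key i, sq]
  rw [he2] at h2
  have h3 : (innerSL ℝ x) x = ‖x‖ ^ 2 := by
    simp only [innerSL_apply_apply]; exact real_inner_self_eq_norm_sq x
  rwa [h3] at h2

private lemma piSplit_symm_self {α : Type*} [DecidableEq α] (k : α) (n : ℕ)
    (g : {j // j ≠ k} → ℕ) :
    (Equiv.piSplitAt k (fun _ => ℕ)).symm (n, g) k = n := by
  simp [Equiv.piSplitAt]

private lemma piSplit_symm_ne {α : Type*} [DecidableEq α] (k : α) (n : ℕ)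
    (g : {j // j ≠ k} → ℕ) {j : α} (h : j ≠ k) :
    (Equiv.piSplitAt k (fun _ => ℕ)).symm (n, g) j = g ⟨j, h⟩ := by
  simp [Equiv.piSplitAt, h]

private lemma tsum_piSplit {α : Type*} [DecidableEq α] (k : α)
    (f : (α → ℕ) → ℝ≥0∞) :
    ∑' I, f I = ∑' (g : {j // j ≠ k} → ℕ) (n : ℕ),
      f ((Equiv.piSplitAt k (fun _ => ℕ)).symm (n, g)) := by
  rw [← (Equiv.piSplitAt k (fun _ => ℕ)).symm.tsum_eq f]
  rw [ENNReal.tsum_prod']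
  exact ENNReal.tsum_comm

/-- **Proposition: TT truncation error.** Let `u ∈ L²(μ₁ ⊗ ⋯ ⊗ μ_d)` admit the
tensor-train expansion `u = Σ_I λ_{i₁} λ_{i₁i₂} ⋯ λ_{i₁⋯i_{d-1}} T_I` (convergence in `L²`),
where `(T_I)` is the orthonormal family of products of a TT mode hierarchy, the nonnegative
level-`j` coefficient `λ_{i₁⋯i_j}` depends only on the first `j` components of the
multi-index, and (as produced by recursive bi-orthogonal decomposition of unit-norm modes)
`Σ_{i_j} λ_{i₁⋯i_j}² = 1` for each level `j ≥ 2` and each fixed prefix.  Given truncation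
ranks `r_j = r_j(i₁,…,i_{j-1})` and the truncated expansion `ũ = Σ_{I : i_j < r_j} (∏ λ) T_I`,
the truncation error is
`‖u − ũ‖² = Σ_{m=1}^{d-1} Σ_{i₁<r₁} ⋯ Σ_{i_{m-1}<r_{m-1}} Σ_{i_m ≥ r_m} λ_{i₁}² ⋯ λ_{i₁⋯i_m}²`,
where the inner sum at level `m` is encoded as a `tsum` over multi-indices whose components
beyond `m` are pinned to `0`. -/
theorem tensorTrain_truncation_error
    (d : ℕ) (hd : 2 ≤ d)
    (Ω : Fin d → Type*) [∀ j, MeasurableSpace (Ω j)]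
    (μ : ∀ j, Measure (Ω j)) [∀ j, SigmaFinite (μ j)]
    -- the TT mode hierarchy
    (ψ : (j : Fin d) → (Fin (d - 1) → ℕ) → Lp ℝ 2 (μ j))
    (hdep : ∀ (j : Fin d) (I I' : Fin (d - 1) → ℕ),
      (∀ k : Fin (d - 1), (k : ℕ) ≤ min (j : ℕ) (d - 2) → I k = I' k) → ψ j I = ψ j I')
    (hortho : ∀ (j : Fin d) (h : (j : ℕ) < d - 1) (I : Fin (d - 1) → ℕ),
      Orthonormal ℝ (fun n : ℕ => ψ j (Function.update I ⟨(j : ℕ), h⟩ n)))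
    (hlast : ∀ I : Fin (d - 1) → ℕ, ‖ψ ⟨d - 1, by omega⟩ I‖ = 1)
    (T : (Fin (d - 1) → ℕ) → Lp ℝ 2 (Measure.pi μ))
    (hT : ∀ I, ⇑(T I) =ᵐ[Measure.pi μ] fun x : (j : Fin d) → Ω j => ∏ j, (ψ j I) (x j))
    -- the nonnegative coefficients, level j depending only on components ≤ j
    (lam : Fin (d - 1) → (Fin (d - 1) → ℕ) → ℝ)
    (hlam_nonneg : ∀ j I, 0 ≤ lam j I)
    (hlam_dep : ∀ (j : Fin (d - 1)) (I I' : Fin (d - 1) → ℕ),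
      (∀ k : Fin (d - 1), k ≤ j → I k = I' k) → lam j I = lam j I')
    (hlam_unit : ∀ j : Fin (d - 1), 0 < (j : ℕ) → ∀ I : Fin (d - 1) → ℕ,
      HasSum (fun n : ℕ => (lam j (Function.update I j n)) ^ 2) 1)
    -- the truncation ranks, level j depending only on components < j
    (r : Fin (d - 1) → (Fin (d - 1) → ℕ) → ℕ)
    (hr_dep : ∀ (j : Fin (d - 1)) (I I' : Fin (d - 1) → ℕ),
      (∀ k : Fin (d - 1), k < j → I k = I' k) → r j I = r j I')
    -- the full and truncated expansions
    (u v : Lp ℝ 2 (Measure.pi μ))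
    (hu : HasSum (fun I : Fin (d - 1) → ℕ => (∏ j, lam j I) • T I) u)
    (hv : HasSum (fun I : Fin (d - 1) → ℕ =>
      (if ∀ j, I j < r j I then (∏ j, lam j I) else 0) • T I) v) :
    ‖u - v‖ ^ 2 =
      ∑ m : Fin (d - 1), ∑' I : Fin (d - 1) → ℕ,
        if (∀ j, j < m → I j < r j I) ∧ r m I ≤ I m ∧ (∀ j, m < j → I j = 0) then
          ∏ j ∈ Finset.univ.filter (· ≤ m), (lam j I) ^ 2
        else 0 := by
  classical
  have hd1 : 0 < d - 1 := by omega
  -- Step 1: inner products of the T family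
  have hTinner : ∀ I I' : Fin (d - 1) → ℕ,
      (inner ℝ (T I) (T I') : ℝ) = ∏ j, (inner ℝ (ψ j I) (ψ j I') : ℝ) := by
    intro I I'
    letI : ∀ j, MeasureSpace (Ω j) := fun j => ⟨μ j⟩
    letI : ∀ j, SigmaFinite (volume : Measure (Ω j)) := fun j => inferInstanceAs (SigmaFinite (μ j))
    rw [MeasureTheory.L2.inner_def]
    have h1 : ∫ a, (inner ℝ (T I a) (T I' a) : ℝ) ∂(Measure.pi μ)
        = ∫ x : (j : Fin d) → Ω j, ∏ j, ((ψ j I) (x j) * (ψ j I') (x j)) ∂(Measure.pi μ) := by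
      refine integral_congr_ae ?_
      filter_upwards [hT I, hT I'] with x e1 e2
      rw [e1, e2]
      simp only [RCLike.inner_apply, starRingEnd_apply, star_trivial,
        ← Finset.prod_mul_distrib]
      exact Finset.prod_congr rfl fun j _ => mul_comm _ _
    rw [h1]
    have h2 : Measure.pi μ = (volume : Measure ((j : Fin d) → Ω j)) := rfl
    rw [h2]
    have h3 := MeasureTheory.integral_fin_nat_prod_eq_prod
      (𝕜 := ℝ) (μ := μ) (f := fun (j : Fin d) (y : Ω j) => (ψ j I) y * (ψ j I') y)
    rw [← h2, h3]
    refine Finset.prod_congr rfl fun j _ => ?_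
    rw [MeasureTheory.L2.inner_def]
    simp only [RCLike.inner_apply, starRingEnd_apply, star_trivial]
    exact integral_congr_ae (Filter.Eventually.of_forall fun x => mul_comm _ _)
  -- norm-one
  have hone : ∀ I, (inner ℝ (T I) (T I) : ℝ) = 1 := by
    intro I
    rw [hTinner]
    apply Finset.prod_eq_one
    intro j _
    rcases lt_or_ge (j : ℕ) (d - 1) with hj | hj
    · have h1 := (hortho j hj I).1 (I ⟨(j : ℕ), hj⟩)
      simp only [Function.update_eq_self] at h1
      rw [real_inner_self_eq_norm_sq, h1, one_pow]
    · have hjd := j.isLt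
      have hj' : j = ⟨d - 1, by omega⟩ := Fin.ext (by show (j : ℕ) = d - 1; omega)
      rw [real_inner_self_eq_norm_sq, hj', hlast, one_pow]
  -- orthogonality
  have hzero : ∀ I I', I ≠ I' → (inner ℝ (T I) (T I') : ℝ) = 0 := by
    intro I I' hne
    rw [hTinner]
    have hne' : ∃ k0 : Fin (d - 1), I k0 ≠ I' k0 := by
      by_contra h; push_neg at h; exact hne (funext h)
    obtain ⟨k0, hk0⟩ := hne'
    obtain ⟨k, hk, hmin⟩ := Finset.exists_min_image
      (Finset.univ.filter fun l => I l ≠ I' l) (fun l => (l : ℕ))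
      ⟨k0, by simp [hk0]⟩
    simp only [Finset.mem_filter, Finset.mem_univ, true_and] at hk hmin
    have hkd : (k : ℕ) < d := by have := k.isLt; omega
    refine Finset.prod_eq_zero (Finset.mem_univ (⟨(k : ℕ), hkd⟩ : Fin d)) ?_
    have hj : ((⟨(k : ℕ), hkd⟩ : Fin d) : ℕ) < d - 1 := k.isLt
    have hmin' : ∀ l : Fin (d - 1), (l : ℕ) < (k : ℕ) → I l = I' l := by
      intro l hl
      by_contra h
      exact absurd (hmin l h) (by omega)
    have e1 : ψ ⟨(k : ℕ), hkd⟩ I = ψ ⟨(k : ℕ), hkd⟩ (Function.update I' k (I k)) := by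
      apply hdep
      intro l hl
      have hlk : (l : ℕ) ≤ (k : ℕ) := le_trans hl (min_le_left _ _)
      rcases lt_or_eq_of_le hlk with h | h
      · rw [Function.update_of_ne (by exact fun hc => by rw [hc] at h; omega), hmin' l h]
      · have : l = k := Fin.ext h
        subst this
        rw [Function.update_self]
    have e2 : ψ ⟨(k : ℕ), hkd⟩ I' = ψ ⟨(k : ℕ), hkd⟩ (Function.update I' k (I' k)) := by
      rw [Function.update_eq_self]
    rw [e1, e2]
    have horth := (hortho ⟨(k : ℕ), hkd⟩ hj I').2 hk
    have hkk : (⟨((⟨(k : ℕ), hkd⟩ : Fin d) : ℕ), hj⟩ : Fin (d - 1)) = k := Fin.ext rfl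
    rw [hkk] at horth
    exact horth
  -- Step 2: Parseval for u - v
  set c : (Fin (d - 1) → ℕ) → ℝ :=
    fun I => if ∀ j, I j < r j I then 0 else ∏ j, lam j I with hc
  have huv : HasSum (fun I => c I • T I) (u - v) := by
    have h0 := hu.sub hv
    have hfun : (fun I => (∏ j, lam j I) • T I -
        (if ∀ j, I j < r j I then (∏ j, lam j I) else 0) • T I)
        = fun I => c I • T I := by
      funext I
      by_cases h : ∀ j, I j < r j I
      · simp [hc, h]
      · simp [hc, h]
    rwa [hfun] at h0
  have hnorm : HasSum (fun I => c I ^ 2) (‖u - v‖ ^ 2) :=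
    parseval_aux hone hzero huv
  -- ENNReal versions of the data
  set L : Fin (d - 1) → (Fin (d - 1) → ℕ) → ℝ≥0∞ :=
    fun j I => ENNReal.ofReal ((lam j I) ^ 2) with hLdef
  set F : (Fin (d - 1) → ℕ) → ℝ≥0∞ :=
    fun I => if ∀ j, I j < r j I then 0 else ∏ j, L j I with hFdef
  have hcF : ∀ I, ENNReal.ofReal (c I ^ 2) = F I := by
    intro I
    by_cases h : ∀ j, I j < r j I
    · simp [hc, hFdef, h]
    · simp only [hc, hFdef, if_neg h]
      rw [← Finset.prod_pow]
      exact ENNReal.ofReal_prod_of_nonneg fun j _ => sq_nonneg _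
  have hFsum : ∑' I, F I = ENNReal.ofReal (‖u - v‖ ^ 2) := by
    rw [ENNReal.ofReal_tsum_of_nonneg (fun I => sq_nonneg (c I)) hnorm.summable |>.symm.trans
      (congrArg ENNReal.ofReal hnorm.tsum_eq) |>.symm]
    exact tsum_congr fun I => (hcF I).symm
  have hFne : ∑' I, F I ≠ ⊤ := by rw [hFsum]; exact ENNReal.ofReal_ne_top
  -- ENNReal version of the right-hand side
  set G : Fin (d - 1) → (Fin (d - 1) → ℕ) → ℝ≥0∞ := fun m I =>
    if (∀ j, j < m → I j < r j I) ∧ r m I ≤ I m ∧ (∀ j, m < j → I j = 0) then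
      ∏ j ∈ Finset.univ.filter (· ≤ m), L j I
    else 0 with hGdef
  have hGreal : ∀ m I, (G m I).toReal =
      if (∀ j, j < m → I j < r j I) ∧ r m I ≤ I m ∧ (∀ j, m < j → I j = 0) then
        ∏ j ∈ Finset.univ.filter (· ≤ m), (lam j I) ^ 2
      else 0 := by
    intro m I
    by_cases h : (∀ j, j < m → I j < r j I) ∧ r m I ≤ I m ∧ (∀ j, m < j → I j = 0)
    · rw [hGdef]
      simp only [if_pos h]
      rw [← ENNReal.ofReal_prod_of_nonneg fun j _ => sq_nonneg _,
        ENNReal.toReal_ofReal (Finset.prod_nonneg fun j _ => sq_nonneg _)]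
    · simp [hGdef, if_neg h, h]
  -- the key ENNReal identity
  have key : ∑' I, F I = ∑ m : Fin (d - 1), ∑' I, G m I := by
    have hpt : ∀ I, F I = ∑ m : Fin (d - 1),
        (if (∀ j, j < m → I j < r j I) ∧ r m I ≤ I m then ∏ j, L j I else 0) := by
      intro I
      by_cases hP : ∀ j, I j < r j I
      · rw [hFdef]
        dsimp only
        rw [if_pos hP]
        symm
        refine Finset.sum_eq_zero fun m _ => ?_
        rw [if_neg]
        rintro ⟨-, h2⟩
        exact absurd (hP m) (not_lt.mpr h2)
      · rw [hFdef]
        dsimp only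
        rw [if_neg hP]
        push_neg at hP
        obtain ⟨m0, hm0⟩ := hP
        obtain ⟨m, hm, hmin⟩ := Finset.exists_min_image
          (Finset.univ.filter fun l => r l I ≤ I l) (fun l => (l : ℕ)) ⟨m0, by simp [hm0]⟩
        simp only [Finset.mem_filter, Finset.mem_univ, true_and] at hm hmin
        have hB : (∀ j, j < m → I j < r j I) ∧ r m I ≤ I m := by
          refine ⟨fun j hj => ?_, hm⟩
          by_contra hcon
          have h3 := hmin j (not_lt.mp hcon)
          rw [Fin.lt_def] at hj
          omega
        symm
        refine (Finset.sum_eq_single m ?_ ?_).trans (if_pos hB)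
        · intro m' _ hne
          rw [if_neg]
          rintro ⟨h1, h2⟩
          have h3 := hmin m' h2
          have h4 : ¬ m < m' := fun hgt => absurd (h1 m hgt) (not_lt.mpr hm)
          rw [Fin.lt_def] at h4
          exact hne (Fin.ext (by omega)).symm
        · intro hmem
          exact absurd (Finset.mem_univ m) hmem
    rw [tsum_congr hpt, Summable.tsum_finsetSum fun m _ => ENNReal.summable]
    refine Finset.sum_congr rfl fun m _ => ?_
    -- Step B: sum out the free trailing coordinates
    set B' : (Fin (d - 1) → ℕ) → Prop :=
      fun I => (∀ j, j < m → I j < r j I) ∧ r m I ≤ I m with hB'def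
    set fH : ℕ → (Fin (d - 1) → ℕ) → ℝ≥0∞ := fun t I =>
      if B' I ∧ (∀ j : Fin (d - 1), t ≤ (j : ℕ) → I j = 0) then
        ∏ j ∈ Finset.univ.filter (fun j : Fin (d - 1) => (j : ℕ) < t), L j I
      else 0 with hfHdef
    have hstep : ∀ t, (m : ℕ) < t → t < d - 1 →
        (∑' I, fH (t + 1) I) = ∑' I, fH t I := by
      intro t hmt htd
      set k : Fin (d - 1) := ⟨t, htd⟩ with hkdef
      rw [tsum_piSplit k (fH (t + 1)), tsum_piSplit k (fH t)]
      refine tsum_congr fun g => ?_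
      set S : ℕ → (Fin (d - 1) → ℕ) :=
        fun n => (Equiv.piSplitAt k (fun _ => ℕ)).symm (n, g) with hSdef
      have hSk : ∀ n, S n k = n := fun n => piSplit_symm_self k n g
      have hSne : ∀ n n' (j : Fin (d - 1)), j ≠ k → S n j = S n' j := by
        intro n n' j hj
        rw [hSdef]
        dsimp only
        rw [piSplit_symm_ne k n g hj, piSplit_symm_ne k n' g hj]
      have hkt : (k : ℕ) = t := rfl
      have hrr : ∀ n n' (j : Fin (d - 1)), (j : ℕ) ≤ (m : ℕ) → r j (S n) = r j (S n') := by
        intro n n' j hj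
        refine hr_dep j _ _ fun l hl => ?_
        rw [Fin.lt_def] at hl
        exact hSne n n' l (fun hc => by rw [hc] at hl; rw [hkt] at hl; omega)
      have hBimp : ∀ n n', B' (S n) → B' (S n') := by
        rintro n n' ⟨h1, h2⟩
        constructor
        · intro j hj
          have hjk : j ≠ k := by
            rw [Fin.lt_def] at hj
            exact fun hc => by rw [hc, hkt] at hj; omega
          rw [← hSne n n' j hjk, ← hrr n n' j (le_of_lt hj)]
          exact h1 j hj
        · have hmk : m ≠ k := fun hc => by rw [hc] at hmt; rw [← hkt] at hmt; omega
          rw [← hSne n n' m hmk, ← hrr n n' m le_rfl]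
          exact h2
      have htails : ∀ n n', (∀ j : Fin (d - 1), t + 1 ≤ (j : ℕ) → S n j = 0) →
          (∀ j : Fin (d - 1), t + 1 ≤ (j : ℕ) → S n' j = 0) := by
        intro n n' h j hj
        have hjk : j ≠ k := fun hc => by rw [hc, hkt] at hj; omega
        rw [← hSne n n' j hjk]
        exact h j hj
      have hprod : ∀ n n',
          (∏ j ∈ Finset.univ.filter (fun j : Fin (d - 1) => (j : ℕ) < t), L j (S n))
          = ∏ j ∈ Finset.univ.filter (fun j : Fin (d - 1) => (j : ℕ) < t), L j (S n') := by
        intro n n'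
        refine Finset.prod_congr rfl fun j hj => ?_
        simp only [Finset.mem_filter] at hj
        rw [hLdef]
        dsimp only
        congr 1
        refine congrArg (· ^ 2) (hlam_dep j _ _ fun l hl => ?_)
        rw [Fin.le_def] at hl
        exact hSne n n' l (fun hc => by rw [hc, hkt] at hl; omega)
      set X : ℝ≥0∞ :=
        ∏ j ∈ Finset.univ.filter (fun j : Fin (d - 1) => (j : ℕ) < t), L j (S 0) with hXdef
      set P0 : Prop := B' (S 0) ∧ (∀ j : Fin (d - 1), t + 1 ≤ (j : ℕ) → S 0 j = 0) with hP0def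
      have hsplitset : Finset.univ.filter (fun j : Fin (d - 1) => (j : ℕ) < t + 1)
          = insert k (Finset.univ.filter fun j : Fin (d - 1) => (j : ℕ) < t) := by
        ext j
        simp only [Finset.mem_filter, Finset.mem_univ, true_and, Finset.mem_insert]
        rw [Fin.ext_iff, hkt]
        omega
      have hknot : k ∉ Finset.univ.filter (fun j : Fin (d - 1) => (j : ℕ) < t) := by
        simp [hkt]
      have hleft : ∀ n, fH (t + 1) (S n) = (if P0 then X else 0) * L k (S n) := by
        intro n
        rw [hfHdef]
        dsimp only
        rw [hsplitset, Finset.prod_insert hknot, hprod n 0]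
        by_cases hn : B' (S n) ∧ (∀ j : Fin (d - 1), t + 1 ≤ (j : ℕ) → S n j = 0)
        · rw [if_pos hn, if_pos ⟨hBimp n 0 hn.1, htails n 0 hn.2⟩, mul_comm]
        · rw [if_neg hn, if_neg, zero_mul]
          rintro ⟨ha, hb⟩
          exact hn ⟨hBimp 0 n ha, htails 0 n hb⟩
      have hright : ∀ n, fH t (S n) = if n = 0 then (if P0 then X else 0) else 0 := by
        intro n
        rw [hfHdef]
        dsimp only
        by_cases hn : n = 0
        · subst hn
          rw [if_pos rfl]
          refine if_congr ?_ rfl rfl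
          constructor
          · rintro ⟨h1, h2⟩
            exact ⟨h1, fun j hj => h2 j (by omega)⟩
          · rintro ⟨h1, h2⟩
            refine ⟨h1, fun j hj => ?_⟩
            rcases eq_or_lt_of_le hj with heq | hlt
            · have : j = k := Fin.ext (by rw [hkt]; omega)
              rw [this]
              exact hSk 0
            · exact h2 j (by omega)
        · rw [if_neg hn, if_neg]
          rintro ⟨-, h2⟩
          exact hn (by rw [← hSk n]; exact h2 k (by rw [hkt]))
      calc (∑' n, fH (t + 1) (S n)) = ∑' n, (if P0 then X else 0) * L k (S n) :=
            tsum_congr hleft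
        _ = (if P0 then X else 0) * ∑' n, L k (S n) := ENNReal.tsum_mul_left
        _ = (if P0 then X else 0) := by
            have hu1 := hlam_unit k (by rw [hkt]; omega) (S 0)
            have hlk : ∀ n, L k (S n) = ENNReal.ofReal ((lam k (Function.update (S 0) k n)) ^ 2) := by
              intro n
              rw [hLdef]
              dsimp only
              congr 2
              refine hlam_dep k _ _ fun l hl => ?_
              rcases eq_or_ne l k with rfl | hlk
              · rw [hSk n, Function.update_self]
              · rw [hSne n 0 l hlk, Function.update_of_ne hlk]
            rw [tsum_congr hlk, ← ENNReal.ofReal_tsum_of_nonneg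
              (fun n => sq_nonneg _) hu1.summable, hu1.tsum_eq]
            simp
        _ = ∑' n, fH t (S n) := by
            rw [tsum_congr hright, tsum_eq_single 0 fun n hn => if_neg hn, if_pos rfl]
    have hind : ∀ t, (m : ℕ) + 1 ≤ t → t ≤ d - 1 →
        (∑' I, fH t I) = ∑' I, fH ((m : ℕ) + 1) I := by
      intro t
      induction t with
      | zero => omega
      | succ t ih =>
        intro h1 h2
        rcases eq_or_lt_of_le h1 with heq | hlt
        · rw [← heq]
        · have hmt : (m : ℕ) < t := by omega
          have htd : t < d - 1 := by omega
          rw [hstep t hmt htd]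
          exact ih (by omega) (by omega)
    have hLHS : (∑' I, (if (∀ j, j < m → I j < r j I) ∧ r m I ≤ I m
        then ∏ j, L j I else 0)) = ∑' I, fH (d - 1) I := by
      refine tsum_congr fun I => ?_
      rw [hfHdef]
      dsimp only
      refine if_congr ?_ ?_ rfl
      · constructor
        · exact fun h => ⟨h, fun j hj => absurd j.isLt (not_lt.mpr hj)⟩
        · exact fun h => h.1
      · rw [Finset.filter_true_of_mem fun j _ => j.isLt]
    have hRHS : (∑' I, fH ((m : ℕ) + 1) I) = ∑' I, G m I := by
      refine tsum_congr fun I => ?_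
      rw [hfHdef, hGdef]
      dsimp only
      refine if_congr ?_ ?_ rfl
      · rw [and_assoc]
        constructor
        · rintro ⟨h1, h2, h3⟩
          exact ⟨h1, h2, fun j hj => h3 j (by rw [Fin.lt_def] at hj; omega)⟩
        · rintro ⟨h1, h2, h3⟩
          exact ⟨h1, h2, fun j hj => h3 j (by rw [Fin.lt_def]; omega)⟩
      · refine Finset.prod_congr ?_ fun _ _ => rfl
        refine Finset.filter_congr fun j _ => ?_
        rw [Fin.le_def]
        omega
    have hmlt := m.isLt
    rw [hLHS, hind (d - 1) (by omega) le_rfl, hRHS]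

  -- conclusion
  have hGne : ∀ m : Fin (d - 1), ∑' I, G m I ≠ ⊤ := by
    intro m
    have := hFne
    rw [key] at this
    exact ENNReal.sum_ne_top.mp this m (Finset.mem_univ m)
  calc ‖u - v‖ ^ 2 = (∑' I, F I).toReal := by
        rw [hFsum, ENNReal.toReal_ofReal (sq_nonneg _)]
    _ = ∑ m : Fin (d - 1), (∑' I, G m I).toReal := by
        rw [key, ENNReal.toReal_sum fun m _ => hGne m]
    _ = _ := by
        refine Finset.sum_congr rfl fun m _ => ?_
        rw [ENNReal.tsum_toReal_eq fun I => ?_]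
        · exact tsum_congr fun I => hGreal m I
        · rw [hGdef]
          dsimp only
          split
          · exact ENNReal.prod_ne_top fun j _ => ENNReal.ofReal_ne_top
          · exact ENNReal.zero_ne_top
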